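/- Let G be a simple graph on a vertex type V, and let cone(G) be the simple graph on Option V in which the extra vertex (none) is adjacent to every vertex (some a), and (some a) is adjacent to (some b) if and only if a and b are adjacent in G. Let H be a simple graph. Then cone(G) admits a graph homomorphism to H if and only if there exists a vertex w of H such that G admits a graph homomorphism to the subgraph of H induced on the neighborhood of w. -/

import Mathlib

/-- The cone over a simple graph `G`: one new vertex (`none`) adjacent to every vertex of
`G`, with the adjacency of `G` preserved on the old vertices. -/
def SimpleGraph.cone {V : Type*} (G : SimpleGraph V) : SimpleGraph (Option V) where
  Adj u v :=
    match u, v with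
    | none, none => False
    | none, some _ => True
    | some _, none => True
    | some a, some b => G.Adj a b
  symm := by
    constructor
    intro u v h
    cases u <;> cases v <;> simp_all <;> exact h.symm
  loopless := by
    constructor
    intro u
    cases u <;> simp

/-- `cone G` is homomorphic to `H` iff `G` is homomorphic to the subgraph of `H` induced
on the neighborhood of some vertex `w` of `H`. -/
theorem stmt_7 {V W : Type*} (G : SimpleGraph V) (H : SimpleGraph W) :
    Nonempty (G.cone →g H) ↔
      ∃ w : W, Nonempty (G →g H.induce (H.neighborSet w)) := by
  constructor
  · rintro ⟨f⟩
    refine ⟨f none, ⟨⟨fun v => ⟨f (some v), ?_⟩, ?_⟩⟩⟩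
    · exact f.map_adj (show G.cone.Adj none (some v) from trivial)
    · intro a b hab
      exact f.map_adj (show G.cone.Adj (some a) (some b) from hab)
  · rintro ⟨w, ⟨f⟩⟩
    refine ⟨⟨fun v => v.elim w (fun a => (f a).1), ?_⟩⟩
    intro u v huv
    match u, v with
    | none, some b => exact (f b).2
    | some a, none => exact ((f a).2).symm
    | some a, some b => exact f.map_adj huv
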